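/- Let m ≥ 3 and let b̃ : ℝ^m → ℝ be continuous and satisfy 0 ≤ b̃(x) ≤ C(1+|x|²)^{-2} for all x ∈ ℝ^m and some constant C > 0. Then the infimum of the weighted Sobolev quotient Q_{b̃} over all admissible functions equals the infimum of the unweighted quotient Q_0 over all admissible functions; that is, S_{b̃} = S_0. -/

import Mathlib

open MeasureTheory

/-- The critical Sobolev exponent integral `∫ |f|^{2*}` with `2* = 2m/(m-2)`. -/
noncomputable def critInt (m : ℕ) (f : EuclideanSpace ℝ (Fin m) → ℝ) : ℝ :=
  ∫ x : EuclideanSpace ℝ (Fin m), |f x| ^ ((2 * (m : ℝ)) / ((m : ℝ) - 2))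

/-- A function `f : ℝ^m → ℝ` is admissible if it is `C¹`, `0 < ∫ |f|^{2*} < ∞`
and `∫ ‖∇f‖² < ∞`. -/
def Admissible (m : ℕ) (f : EuclideanSpace ℝ (Fin m) → ℝ) : Prop :=
  ContDiff ℝ 1 f ∧
  Integrable (fun x : EuclideanSpace ℝ (Fin m) =>
    |f x| ^ ((2 * (m : ℝ)) / ((m : ℝ) - 2))) ∧
  0 < critInt m f ∧
  Integrable (fun x : EuclideanSpace ℝ (Fin m) => ‖fderiv ℝ f x‖ ^ 2)

/-- The weighted Sobolev quotient `Q_b(f)`; note `2/2* = (m-2)/m`. -/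
noncomputable def sobolevQuot (m : ℕ) (b : EuclideanSpace ℝ (Fin m) → ℝ)
    (f : EuclideanSpace ℝ (Fin m) → ℝ) : ℝ :=
  (∫ x : EuclideanSpace ℝ (Fin m), (‖fderiv ℝ f x‖ ^ 2 + b x * f x ^ 2)) /
    (critInt m f) ^ (((m : ℝ) - 2) / (m : ℝ))

/-- The infimum `S_b` of the weighted Sobolev quotient over all admissible functions. -/
noncomputable def sobolevInf (m : ℕ) (b : EuclideanSpace ℝ (Fin m) → ℝ) : ℝ :=
  sInf {r : ℝ | ∃ f, Admissible m f ∧ sobolevQuot m b f = r}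

open Metric ENNReal Filter

section Aux

variable {m : ℕ}

lemma conjExp (hm : 3 ≤ m) : Real.HolderConjugate ((m:ℝ)/2) ((m:ℝ)/((m:ℝ)-2)) := by
  have h3 : (3:ℝ) ≤ (m:ℝ) := by exact_mod_cast hm
  constructor
  · have h0 : (m:ℝ) ≠ 0 := by linarith
    rw [inv_div, inv_div, inv_one, ← add_div, show (2:ℝ) + ((m:ℝ)-2) = m by ring, div_self h0]
  · linarith
  · exact div_pos (by linarith) (by linarith)

lemma holder_bound (hm : 3 ≤ m) (μ : Measure (EuclideanSpace ℝ (Fin m)))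
    {w f : EuclideanSpace ℝ (Fin m) → ℝ} (hw : AEMeasurable w μ) (hf : AEMeasurable f μ)
    (hw0 : ∀ x, 0 ≤ w x) :
    ∫⁻ x, ENNReal.ofReal (w x * f x ^ 2) ∂μ ≤
      (∫⁻ x, (ENNReal.ofReal (w x)) ^ ((m:ℝ)/2) ∂μ) ^ (2/(m:ℝ)) *
      (∫⁻ x, ENNReal.ofReal (|f x| ^ ((2*(m:ℝ))/((m:ℝ)-2))) ∂μ) ^ (((m:ℝ)-2)/(m:ℝ)) := by
  have h3 : (3:ℝ) ≤ (m:ℝ) := by exact_mod_cast hm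
  have hpq := conjExp hm
  have hW : AEMeasurable (fun x => ENNReal.ofReal (w x)) μ :=
    ENNReal.measurable_ofReal.comp_aemeasurable hw
  have hF : AEMeasurable (fun x => ENNReal.ofReal (f x ^ 2)) μ :=
    ENNReal.measurable_ofReal.comp_aemeasurable ((hf.pow_const 2))
  have key := ENNReal.lintegral_mul_le_Lp_mul_Lq μ hpq hW hF
  have e1 : ∀ x, ENNReal.ofReal (w x * f x ^ 2)
      = ((fun x => ENNReal.ofReal (w x)) * (fun x => ENNReal.ofReal (f x ^2))) x := by
    intro x
    simp [ENNReal.ofReal_mul (hw0 x)]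
  have e2 : ∀ x, (ENNReal.ofReal (f x ^ 2)) ^ ((m:ℝ)/((m:ℝ)-2))
      = ENNReal.ofReal (|f x| ^ ((2*(m:ℝ))/((m:ℝ)-2))) := by
    intro x
    have hr : (f x ^ 2 : ℝ) ^ ((m:ℝ)/((m:ℝ)-2)) = |f x| ^ ((2*(m:ℝ))/((m:ℝ)-2)) := by
      rw [← sq_abs (f x), ← Real.rpow_two, ← Real.rpow_mul (abs_nonneg _)]
      congr 1
      ring
    rw [← hr, ENNReal.ofReal_rpow_of_nonneg (sq_nonneg _)
      (div_nonneg (by linarith) (by linarith))]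
  have e3 : 1/((m:ℝ)/2) = 2/(m:ℝ) := by rw [one_div_div]
  have e4 : 1/((m:ℝ)/((m:ℝ)-2)) = ((m:ℝ)-2)/(m:ℝ) := by rw [one_div_div]
  calc ∫⁻ x, ENNReal.ofReal (w x * f x ^ 2) ∂μ
      = ∫⁻ x, ((fun x => ENNReal.ofReal (w x)) * (fun x => ENNReal.ofReal (f x ^2))) x ∂μ := by
        simp_rw [e1]
    _ ≤ _ := key
    _ = _ := by
        rw [e3, e4]
        congr 1
        congr 1
        exact lintegral_congr fun x => e2 x

lemma weight_lintegral_lt_top (hm : 3 ≤ m) {C : ℝ} (hC : 0 < C)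
    {w : EuclideanSpace ℝ (Fin m) → ℝ}
    (hw0 : ∀ x, 0 ≤ w x) (hwb : ∀ x, w x ≤ C / (1 + ‖x‖^2)^2) :
    ∫⁻ x, (ENNReal.ofReal (w x)) ^ ((m:ℝ)/2) < ⊤ := by
  have h3 : (3:ℝ) ≤ (m:ℝ) := by exact_mod_cast hm
  have hint : Integrable (fun x : EuclideanSpace ℝ (Fin m) =>
      C ^ ((m:ℝ)/2) * ((1:ℝ)+‖x‖^2) ^ (-(2*(m:ℝ))/2)) := by
    apply Integrable.const_mul
    apply integrable_rpow_neg_one_add_norm_sq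
    simp only [finrank_euclideanSpace, Fintype.card_fin]
    linarith
  calc ∫⁻ x, (ENNReal.ofReal (w x)) ^ ((m:ℝ)/2)
      ≤ ∫⁻ x, ENNReal.ofReal (C ^ ((m:ℝ)/2) * ((1:ℝ)+‖x‖^2) ^ (-(2*(m:ℝ))/2)) := by
        apply lintegral_mono
        intro x
        dsimp only
        rw [ENNReal.ofReal_rpow_of_nonneg (hw0 x) (by linarith)]
        apply ENNReal.ofReal_le_ofReal
        have hpos : (0:ℝ) < 1 + ‖x‖^2 := by positivity
        have h1 : w x ^ ((m:ℝ)/2) ≤ (C / (1+‖x‖^2)^2) ^ ((m:ℝ)/2) :=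
          Real.rpow_le_rpow (hw0 x) (hwb x) (by linarith)
        refine h1.trans (le_of_eq ?_)
        rw [Real.div_rpow hC.le (by positivity), div_eq_mul_inv]
        congr 1
        rw [← Real.rpow_natCast ((1:ℝ)+‖x‖^2) 2, ← Real.rpow_mul hpos.le,
          ← Real.rpow_neg hpos.le]
        congr 1
        push_cast
        ring
    _ < ⊤ := hint.lintegral_lt_top

lemma lint_pe_lt_top {f : EuclideanSpace ℝ (Fin m) → ℝ}
    (hfi : Integrable (fun x => |f x| ^ ((2*(m:ℝ))/((m:ℝ)-2)))) :
    ∫⁻ x, ENNReal.ofReal (|f x| ^ ((2*(m:ℝ))/((m:ℝ)-2))) < ⊤ :=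
  hfi.lintegral_lt_top

lemma integrable_weight_mul_sq (hm : 3 ≤ m) {w f : EuclideanSpace ℝ (Fin m) → ℝ}
    (hwc : Continuous w) (hfc : Continuous f) (hw0 : ∀ x, 0 ≤ w x)
    (hW : ∫⁻ x, (ENNReal.ofReal (w x)) ^ ((m:ℝ)/2) < ⊤)
    (hfi : Integrable (fun x => |f x| ^ ((2*(m:ℝ))/((m:ℝ)-2)))) :
    Integrable (fun x => w x * f x ^ 2) := by
  have h3 : (3:ℝ) ≤ (m:ℝ) := by exact_mod_cast hm
  constructor
  · exact (hwc.mul (hfc.pow 2)).aestronglyMeasurable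
  · rw [hasFiniteIntegral_iff_norm]
    have e : ∀ x, ENNReal.ofReal ‖w x * f x ^ 2‖ = ENNReal.ofReal (w x * f x ^ 2) := by
      intro x
      rw [Real.norm_of_nonneg (mul_nonneg (hw0 x) (sq_nonneg _))]
    calc ∫⁻ x, ENNReal.ofReal ‖w x * f x ^ 2‖
        = ∫⁻ x, ENNReal.ofReal (w x * f x ^ 2) := lintegral_congr e
      _ ≤ _ := holder_bound hm volume hwc.measurable.aemeasurable
            hfc.measurable.aemeasurable hw0
      _ < ⊤ := ENNReal.mul_lt_top
          (ENNReal.rpow_lt_top_of_nonneg (div_nonneg (by linarith) (by linarith)) hW.ne)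
          (ENNReal.rpow_lt_top_of_nonneg (div_nonneg (by linarith) (by linarith))
            (lint_pe_lt_top hfi).ne)

lemma exists_tail_small {g : EuclideanSpace ℝ (Fin m) → ℝ≥0∞} (hg : Measurable g)
    (hfin : ∫⁻ x, g x < ⊤) {ε : ℝ≥0∞} (hε : 0 < ε) :
    ∃ R : ℝ, 0 ≤ R ∧ ∫⁻ x in (closedBall (0:EuclideanSpace ℝ (Fin m)) R)ᶜ, g x < ε := by
  set ν := volume.withDensity g with hν_def
  have hν : ν Set.univ < ⊤ := by
    rw [hν_def, withDensity_apply _ MeasurableSet.univ]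
    simpa [Measure.restrict_univ] using hfin
  have hanti : Antitone fun n : ℕ => (closedBall (0:EuclideanSpace ℝ (Fin m)) (n:ℝ))ᶜ := by
    intro a b hab
    exact Set.compl_subset_compl.2 (closedBall_subset_closedBall (by exact_mod_cast hab))
  have hT := tendsto_measure_iInter_atTop (μ := ν)
    (s := fun n : ℕ => (closedBall (0:EuclideanSpace ℝ (Fin m)) (n:ℝ))ᶜ)
    (fun n => measurableSet_closedBall.compl.nullMeasurableSet)
    hanti ⟨0, ((measure_mono (Set.subset_univ _)).trans_lt hν).ne⟩
  have hI : (⋂ n : ℕ, (closedBall (0:EuclideanSpace ℝ (Fin m)) (n:ℝ))ᶜ) = ∅ :=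
    Set.eq_empty_iff_forall_notMem.2 (fun x hx => by
      obtain ⟨n, hn⟩ := exists_nat_ge ‖x‖
      exact (Set.mem_iInter.1 hx n) (mem_closedBall_zero_iff.2 hn))
  rw [hI, measure_empty] at hT
  have := hT.eventually_lt_const hε
  obtain ⟨n, hn⟩ := this.exists
  refine ⟨n, n.cast_nonneg, ?_⟩
  simp only [Function.comp_apply] at hn
  rwa [withDensity_apply _ (measurableSet_closedBall.compl)] at hn

end Aux


lemma translate_facts {m : ℕ} {f : EuclideanSpace ℝ (Fin m) → ℝ} (hf : Admissible m f)
    (v : EuclideanSpace ℝ (Fin m)) :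
    Admissible m (fun x => f (x - v)) ∧
    critInt m (fun x => f (x - v)) = critInt m f ∧
    (∫ x, ‖fderiv ℝ (fun x => f (x - v)) x‖ ^ 2) = ∫ x, ‖fderiv ℝ f x‖ ^ 2 := by
  obtain ⟨hc, hi, hpos, hg⟩ := hf
  have hd : ∀ x, fderiv ℝ (fun x => f (x - v)) x = fderiv ℝ f (x - v) := by
    intro x
    have h1 : HasFDerivAt (fun y : EuclideanSpace ℝ (Fin m) => y - v)
        (ContinuousLinearMap.id ℝ _) x := (hasFDerivAt_id x).sub_const v
    have h2 : HasFDerivAt f (fderiv ℝ f (x - v)) (x - v) :=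
      (hc.differentiable one_ne_zero (x - v)).hasFDerivAt
    have h3 : HasFDerivAt (fun y => f (y - v)) (fderiv ℝ f (x - v)) x := by
      have h4 := h2.comp x h1; rw [ContinuousLinearMap.comp_id] at h4; exact h4
    exact h3.fderiv
  have hcrit : critInt m (fun x => f (x - v)) = critInt m f := by
    simp only [critInt]
    exact integral_sub_right_eq_self (fun y => |f y| ^ ((2*(m:ℝ))/((m:ℝ)-2))) v
  refine ⟨⟨hc.comp (contDiff_id.sub contDiff_const), hi.comp_sub_right v, ?_, ?_⟩, hcrit, ?_⟩
  · rw [hcrit]; exact hpos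
  · exact (hg.comp_sub_right v).congr
      (Filter.Eventually.of_forall (fun x => by
        show ‖fderiv ℝ f (x - v)‖ ^ 2 = ‖fderiv ℝ (fun x => f (x - v)) x‖ ^ 2
        rw [hd x]))
  · simp_rw [hd]
    exact integral_sub_right_eq_self (fun x => ‖fderiv ℝ f x‖ ^ 2) v

lemma exists_admissible (m : ℕ) (hm : 3 ≤ m) : ∃ f, Admissible m f := by
  have h3 : (3:ℝ) ≤ (m:ℝ) := by exact_mod_cast hm
  have hpe_pos : 0 < (2*(m:ℝ))/((m:ℝ)-2) := div_pos (by linarith) (by linarith)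
  let u : ContDiffBump (0 : EuclideanSpace ℝ (Fin m)) := ⟨1, 2, one_pos, one_lt_two⟩
  have huc : Continuous u := u.continuous
  have hcs : HasCompactSupport u := u.hasCompactSupport
  have hpeint : Integrable (fun x => |(u : EuclideanSpace ℝ (Fin m) → ℝ) x| ^ ((2*(m:ℝ))/((m:ℝ)-2))) := by
    have hc2 : Continuous fun x => |(u : EuclideanSpace ℝ (Fin m) → ℝ) x| ^ ((2*(m:ℝ))/((m:ℝ)-2)) :=
      huc.abs.rpow_const (fun x => Or.inr hpe_pos.le)
    apply hc2.integrable_of_hasCompactSupport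
    have : (fun x => |(u : EuclideanSpace ℝ (Fin m) → ℝ) x| ^ ((2*(m:ℝ))/((m:ℝ)-2)))
        = (fun t : ℝ => |t| ^ ((2*(m:ℝ))/((m:ℝ)-2))) ∘ u := rfl
    rw [this]
    exact hcs.comp_left (by simp [Real.zero_rpow hpe_pos.ne'])
  have hcrit : 0 < critInt m u := by
    have hsupp : Function.support (fun x => |(u : EuclideanSpace ℝ (Fin m) → ℝ) x| ^ ((2*(m:ℝ))/((m:ℝ)-2)))
        = Metric.ball (0 : EuclideanSpace ℝ (Fin m)) 2 := by
      rw [← u.support_eq]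
      ext x
      simp only [Function.mem_support, ne_eq]
      rw [Real.rpow_eq_zero (abs_nonneg _) hpe_pos.ne']
      simp
    rw [critInt, integral_pos_iff_support_of_nonneg_ae
      (Filter.Eventually.of_forall (fun x => Real.rpow_nonneg (abs_nonneg _) _)) hpeint, hsupp]
    exact measure_ball_pos _ _ two_pos
  have hfd : Integrable (fun x => ‖fderiv ℝ (u : EuclideanSpace ℝ (Fin m) → ℝ) x‖ ^ 2) := by
    have hcd : Continuous fun x => fderiv ℝ (u : EuclideanSpace ℝ (Fin m) → ℝ) x :=
      (u.contDiff (n := 1)).continuous_fderiv one_ne_zero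
    apply (hcd.norm.pow 2).integrable_of_hasCompactSupport
    have : (fun x => ‖fderiv ℝ (u : EuclideanSpace ℝ (Fin m) → ℝ) x‖ ^ 2)
        = (fun L : EuclideanSpace ℝ (Fin m) →L[ℝ] ℝ => ‖L‖ ^ 2) ∘ (fderiv ℝ u) := rfl
    rw [show ((fun x => ‖fderiv ℝ (u : EuclideanSpace ℝ (Fin m) → ℝ) x‖) ^ 2) = _ from this]
    exact (HasCompactSupport.fderiv (𝕜 := ℝ) hcs).comp_left (by simp)
  exact ⟨u, u.contDiff, hpeint, hcrit, hfd⟩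

lemma exists_translate_small {m : ℕ} (hm : 3 ≤ m)
    {b : EuclideanSpace ℝ (Fin m) → ℝ} (hb_cont : Continuous b)
    {C : ℝ} (hC : 0 < C) (hb0 : ∀ x, 0 ≤ b x) (hbb : ∀ x, b x ≤ C / (1 + ‖x‖^2)^2)
    {f : EuclideanSpace ℝ (Fin m) → ℝ} (hfc : Continuous f)
    (hfi : Integrable (fun x => |f x| ^ ((2*(m:ℝ))/((m:ℝ)-2))))
    {ε : ℝ} (hε : 0 < ε) :
    ∃ v : EuclideanSpace ℝ (Fin m), ∫ y, b (y + v) * f y ^ 2 < ε := by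
  have h3 : (3:ℝ) ≤ (m:ℝ) := by exact_mod_cast hm
  set p := (m:ℝ)/2
  set pe := (2*(m:ℝ))/((m:ℝ)-2) with hpe_def
  -- the weight Lᵖ quantity
  set A := ∫⁻ x : EuclideanSpace ℝ (Fin m), (ENNReal.ofReal (b x)) ^ p with hA_def
  have hA : A < ⊤ := weight_lintegral_lt_top hm hC hb0 hbb
  set K := A ^ (2/(m:ℝ)) with hK_def
  have hK : K < ⊤ := ENNReal.rpow_lt_top_of_nonneg (by positivity) hA.ne
  have hK1 : K + 1 ≠ 0 := by simp
  have hK1' : K + 1 ≠ ⊤ := by simp [hK.ne]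
  have hε4 : (0:ℝ) < ε/4 := by linarith
  -- tail threshold
  set c := ENNReal.ofReal (ε/4) / (K + 1) with hc_def
  have hc0 : 0 < c := ENNReal.div_pos (ne_of_gt (ENNReal.ofReal_pos.2 hε4)) hK1'
  have hc_top : c ≠ ⊤ := (ENNReal.div_lt_top ENNReal.ofReal_ne_top hK1).ne
  set δ := c ^ ((m:ℝ)/((m:ℝ)-2)) with hδ_def
  have hδ0 : 0 < δ := ENNReal.rpow_pos hc0 hc_top
  -- measurability of the pe-power
  have hfpe_cont : Continuous fun x => |f x| ^ pe :=
    hfc.abs.rpow_const (fun x => Or.inr (div_nonneg (by linarith) (by linarith)))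
  obtain ⟨R, hR0, htail⟩ := exists_tail_small
    (ENNReal.continuous_ofReal.comp hfpe_cont).measurable (lint_pe_lt_top hfi) hδ0
  -- inner mass
  set B := closedBall (0:EuclideanSpace ℝ (Fin m)) R with hB_def
  set M := ∫⁻ y in B, ENNReal.ofReal (f y ^ 2) with hM_def
  have hM : M < ⊤ := by
    obtain ⟨K0, hK0⟩ := (isCompact_closedBall (0:EuclideanSpace ℝ (Fin m)) R).exists_bound_of_continuousOn hfc.continuousOn
    calc M ≤ ∫⁻ _ in B, ENNReal.ofReal (K0 ^ 2) := by
          apply setLIntegral_mono (by fun_prop)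
          intro y hy
          exact ENNReal.ofReal_le_ofReal (by
            have := hK0 y hy
            calc f y ^ 2 = |f y| ^ 2 := (sq_abs _).symm
              _ ≤ K0 ^ 2 := by
                  apply pow_le_pow_left₀ (abs_nonneg _)
                  simpa using this)
      _ = ENNReal.ofReal (K0 ^ 2) * volume B := setLIntegral_const _ _
      _ < ⊤ := ENNReal.mul_lt_top ENNReal.ofReal_lt_top measure_closedBall_lt_top
  set M' := M.toReal + 1 with hM'_def
  have hM'0 : (0:ℝ) < M' := by positivity
  have hMM' : M ≤ ENNReal.ofReal M' := by
    rw [← ENNReal.ofReal_toReal hM.ne]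
    exact ENNReal.ofReal_le_ofReal (by simp [hM'_def])
  set δ2 := (ε/4) / M' with hδ2_def
  have hδ2 : 0 < δ2 := by positivity
  -- choose the translation vector
  set t := R + Real.sqrt (C / δ2) with ht_def
  have hst : (0:ℝ) ≤ Real.sqrt (C / δ2) := Real.sqrt_nonneg _
  have ht0 : 0 ≤ t := by positivity
  have hmpos : 0 < m := by omega
  set e : EuclideanSpace ℝ (Fin m) := EuclideanSpace.single (⟨0, hmpos⟩ : Fin m) (1:ℝ) with he_def
  have he : ‖e‖ = 1 := by simp [he_def]
  refine ⟨t • e, ?_⟩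
  set v := t • e with hv_def
  have hv : ‖v‖ = t := by rw [hv_def, norm_smul, he, mul_one, Real.norm_of_nonneg ht0]
  -- pointwise bound on the ball
  have hbv : ∀ y ∈ B, b (y + v) ≤ δ2 := by
    intro y hy
    have hy' : ‖y‖ ≤ R := mem_closedBall_zero_iff.1 hy
    have h2 : ‖v‖ ≤ ‖y + v‖ + ‖y‖ := by
      calc ‖v‖ = ‖(y + v) - y‖ := by congr 1; abel
        _ ≤ ‖y + v‖ + ‖y‖ := norm_sub_le _ _
    have h1 : Real.sqrt (C / δ2) ≤ ‖y + v‖ := by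
      have : t - R ≤ ‖y + v‖ := by rw [← hv]; linarith
      simpa [ht_def] using this
    have hsq : C / δ2 ≤ ‖y + v‖ ^ 2 := by
      rw [← Real.sq_sqrt (by positivity : (0:ℝ) ≤ C / δ2)]
      exact pow_le_pow_left₀ (Real.sqrt_nonneg _) h1 2
    have hden : C / δ2 ≤ (1 + ‖y + v‖ ^ 2) ^ 2 := by
      nlinarith [sq_nonneg (‖y + v‖), sq_nonneg (1 + ‖y+v‖^2)]
    calc b (y + v) ≤ C / (1 + ‖y + v‖ ^ 2) ^ 2 := hbb _
      _ ≤ C / (C / δ2) := by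
          apply div_le_div_of_nonneg_left hC.le (by positivity) hden
      _ = δ2 := by field_simp
  -- the main ennreal estimate
  set I := ∫⁻ y : EuclideanSpace ℝ (Fin m), ENNReal.ofReal (b (y + v) * f y ^ 2) with hI_def
  have hbvc : Continuous fun y : EuclideanSpace ℝ (Fin m) => b (y + v) :=
    hb_cont.comp (continuous_id.add continuous_const)
  have hsplit : I = (∫⁻ y in B, ENNReal.ofReal (b (y + v) * f y ^ 2)) +
      (∫⁻ y in Bᶜ, ENNReal.ofReal (b (y + v) * f y ^ 2)) :=
    (lintegral_add_compl _ measurableSet_closedBall).symm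
  have hin : (∫⁻ y in B, ENNReal.ofReal (b (y + v) * f y ^ 2)) ≤ ENNReal.ofReal (ε/4) := by
    calc (∫⁻ y in B, ENNReal.ofReal (b (y + v) * f y ^ 2))
        ≤ ∫⁻ y in B, ENNReal.ofReal δ2 * ENNReal.ofReal (f y ^ 2) := by
          apply setLIntegral_mono (by fun_prop)
          intro y hy
          rw [ENNReal.ofReal_mul (hb0 _)]
          exact mul_le_mul_left (ENNReal.ofReal_le_ofReal (hbv y hy)) _
      _ = ENNReal.ofReal δ2 * M := lintegral_const_mul' _ _ ENNReal.ofReal_ne_top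
      _ ≤ ENNReal.ofReal δ2 * ENNReal.ofReal M' := mul_le_mul_right hMM' _
      _ = ENNReal.ofReal (δ2 * M') := (ENNReal.ofReal_mul hδ2.le).symm
      _ = ENNReal.ofReal (ε/4) := by
          congr 1
          rw [hδ2_def, div_mul_cancel₀ _ hM'0.ne']
  have htail' : (∫⁻ y in Bᶜ, ENNReal.ofReal (b (y + v) * f y ^ 2)) ≤ ENNReal.ofReal (ε/4) := by
    have hH := holder_bound hm (volume.restrict Bᶜ)
      hbvc.measurable.aemeasurable hfc.measurable.aemeasurable (fun x => hb0 _)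
    have hw1 : (∫⁻ x in Bᶜ, (ENNReal.ofReal (b (x + v))) ^ p) ≤ A := by
      calc (∫⁻ x in Bᶜ, (ENNReal.ofReal (b (x + v))) ^ p)
          ≤ ∫⁻ x, (ENNReal.ofReal (b (x + v))) ^ p := setLIntegral_le_lintegral _ _
        _ = A := by
            rw [hA_def]
            exact lintegral_add_right_eq_self (fun x => (ENNReal.ofReal (b x)) ^ p) v
    have hw2 : (∫⁻ x in Bᶜ, ENNReal.ofReal (|f x| ^ pe)) ≤ δ := htail.le
    calc (∫⁻ y in Bᶜ, ENNReal.ofReal (b (y + v) * f y ^ 2))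
        ≤ (∫⁻ x in Bᶜ, (ENNReal.ofReal (b (x + v))) ^ p) ^ (2/(m:ℝ)) *
          (∫⁻ x in Bᶜ, ENNReal.ofReal (|f x| ^ pe)) ^ (((m:ℝ)-2)/(m:ℝ)) := hH
      _ ≤ K * δ ^ (((m:ℝ)-2)/(m:ℝ)) := by
          apply mul_le_mul'
          · exact ENNReal.rpow_le_rpow hw1 (by positivity)
          · exact ENNReal.rpow_le_rpow hw2 (div_nonneg (by linarith) (by linarith))
      _ = K * c := by
          congr 1
          rw [hδ_def, ← ENNReal.rpow_mul]
          rw [show ((m:ℝ)/((m:ℝ)-2)) * (((m:ℝ)-2)/(m:ℝ)) = 1 by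
            rw [div_mul_div_comm, mul_comm]
            exact div_self (by nlinarith)]
          exact ENNReal.rpow_one c
      _ ≤ (K + 1) * c := mul_le_mul_left le_self_add _
      _ = ENNReal.ofReal (ε/4) := ENNReal.mul_div_cancel hK1 hK1'
  have hI_le : I ≤ ENNReal.ofReal (ε/2) := by
    rw [hsplit]
    calc _ ≤ ENNReal.ofReal (ε/4) + ENNReal.ofReal (ε/4) := add_le_add hin htail'
      _ = ENNReal.ofReal (ε/2) := by
          rw [← ENNReal.ofReal_add hε4.le hε4.le]
          congr 1
          ring
  have hrepr : ∫ y, b (y + v) * f y ^ 2 = I.toReal := by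
    rw [hI_def]
    rw [integral_eq_lintegral_of_nonneg_ae
      (Filter.Eventually.of_forall (fun y => mul_nonneg (hb0 _) (sq_nonneg _)))
      ((hbvc.mul (hfc.pow 2)).aestronglyMeasurable)]
  rw [hrepr]
  have : I.toReal ≤ ε/2 := ENNReal.toReal_le_of_le_ofReal (by linarith) hI_le
  linarith

/-- if `0 ≤ b̃(x) ≤ C(1+|x|²)⁻²`, then `S_{b̃} = S_0`. -/
theorem weighted_sobolev_inf_eq (m : ℕ) (hm : 3 ≤ m)
    (b : EuclideanSpace ℝ (Fin m) → ℝ) (hb_cont : Continuous b)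
    (C : ℝ) (hC : 0 < C)
    (hb_nonneg : ∀ x, 0 ≤ b x)
    (hb_bound : ∀ x, b x ≤ C / (1 + ‖x‖ ^ 2) ^ 2) :
    sobolevInf m b = sobolevInf m (fun _ => 0) := by
  have h3 : (3:ℝ) ≤ (m:ℝ) := by exact_mod_cast hm
  set S := {r : ℝ | ∃ f, Admissible m f ∧ sobolevQuot m b f = r} with hS
  set S0 := {r : ℝ | ∃ f, Admissible m f ∧ sobolevQuot m (fun _ => 0) f = r} with hS0
  have hden : ∀ {f}, Admissible m f → 0 < (critInt m f) ^ (((m:ℝ)-2)/(m:ℝ)) :=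
    fun hf => Real.rpow_pos_of_pos hf.2.2.1 _
  have hQ0 : ∀ f, sobolevQuot m (fun _ => 0) f
      = (∫ x, ‖fderiv ℝ f x‖ ^ 2) / (critInt m f) ^ (((m:ℝ)-2)/(m:ℝ)) := by
    intro f; simp [sobolevQuot]
  have hbW : ∫⁻ x, (ENNReal.ofReal (b x)) ^ ((m:ℝ)/2) < ⊤ :=
    weight_lintegral_lt_top hm hC hb_nonneg hb_bound
  have hbf2 : ∀ {f}, Admissible m f → Integrable (fun x => b x * f x ^ 2) := fun {f} hf =>
    integrable_weight_mul_sq hm hb_cont (hf.1.continuous) hb_nonneg hbW hf.2.1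
  have hS_lb : ∀ r ∈ S, (0:ℝ) ≤ r := by
    rintro r ⟨f, hf, rfl⟩
    apply div_nonneg _ (hden hf).le
    apply integral_nonneg
    intro x
    exact add_nonneg (sq_nonneg _) (mul_nonneg (hb_nonneg x) (sq_nonneg _))
  have hS0_lb : ∀ r ∈ S0, (0:ℝ) ≤ r := by
    rintro r ⟨f, hf, rfl⟩
    apply div_nonneg _ (hden hf).le
    apply integral_nonneg
    intro x
    exact add_nonneg (sq_nonneg _) (mul_nonneg le_rfl (sq_nonneg _))
  obtain ⟨u, hu⟩ := exists_admissible m hm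
  have hS_ne : S.Nonempty := ⟨_, u, hu, rfl⟩
  have hS0_ne : S0.Nonempty := ⟨_, u, hu, rfl⟩
  have hSbdd : BddBelow S := ⟨0, fun r hr => hS_lb r hr⟩
  have hS0bdd : BddBelow S0 := ⟨0, fun r hr => hS0_lb r hr⟩
  apply le_antisymm
  · apply le_csInf hS0_ne
    rintro r ⟨f, hf, rfl⟩
    rw [hQ0 f]
    apply _root_.le_of_forall_pos_le_add
    intro ε hε
    set den := (critInt m f) ^ (((m:ℝ)-2)/(m:ℝ)) with hden_def
    have hdpos : 0 < den := hden hf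
    obtain ⟨v, hv⟩ := exists_translate_small hm hb_cont hC hb_nonneg hb_bound
      hf.1.continuous hf.2.1 (mul_pos hε hdpos)
    obtain ⟨hgadm, hgcrit, hgder⟩ := translate_facts hf v
    set g := fun x => f (x - v) with hg_def
    have hbg2 : Integrable (fun x => b x * g x ^ 2) := hbf2 hgadm
    have hgval : (∫ x, b x * g x ^ 2) = ∫ y, b (y + v) * f y ^ 2 := by
      rw [← integral_add_right_eq_self (fun x => b x * g x ^ 2) v]
      congr 1
      funext y
      simp [hg_def]
    have hQg : sobolevQuot m b g = ((∫ x, ‖fderiv ℝ f x‖ ^ 2) + ∫ x, b x * g x ^2) / den := by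
      rw [sobolevQuot, integral_add hgadm.2.2.2 hbg2, hgcrit, hgder, hden_def]
    have hmem : sobolevQuot m b g ∈ S := ⟨g, hgadm, rfl⟩
    calc sInf S ≤ sobolevQuot m b g := csInf_le hSbdd hmem
      _ = ((∫ x, ‖fderiv ℝ f x‖ ^ 2) + ∫ x, b x * g x ^2) / den := hQg
      _ ≤ ((∫ x, ‖fderiv ℝ f x‖ ^ 2) + ε * den) / den := by
          apply (div_le_div_iff_of_pos_right hdpos).2
          apply add_le_add_right
          rw [hgval]
          exact hv.le
      _ = (∫ x, ‖fderiv ℝ f x‖ ^ 2)/den + ε := by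
          rw [add_div, mul_div_assoc, div_self hdpos.ne', mul_one]
  · apply le_csInf hS_ne
    rintro r ⟨f, hf, rfl⟩
    have h1 : sobolevQuot m (fun _ => 0) f ∈ S0 := ⟨f, hf, rfl⟩
    refine (csInf_le hS0bdd h1).trans ?_
    rw [hQ0 f, sobolevQuot]
    apply (div_le_div_iff_of_pos_right (hden hf)).2
    apply integral_mono hf.2.2.2 (hf.2.2.2.add (hbf2 hf))
    intro x
    exact le_add_of_nonneg_right (mul_nonneg (hb_nonneg x) (sq_nonneg _))
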